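/- Consider the fuzzy frame F with W = {w, w', w''}, R(w,w') = R(w,w'') = 2/3 and R = 0 on all other pairs, and the KGinv-model on F in which every propositional variable q satisfies v(q,w) = 1, v(q,w') = 1/5 and v(q,w'') = 1/4. Then for every formula τ ∈ L_inv: v(τ,w') ∈ {0, 1/5, 4/5, 1} and v(τ,w'') ∈ {0, 1/4, 3/4, 1}. -/
import Mathlib



noncomputable def Gimp (x y : ℝ) : ℝ := if x ≤ y then 1 else y

inductive Fml : Type
  | var : ℕ → Fml
  | inv : Fml → Fml
  | and : Fml → Fml → Fml
  | imp : Fml → Fml → Fml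
  | box : Fml → Fml
  | dia : Fml → Fml
  deriving DecidableEq

noncomputable def Fml.eval {W : Type} (R : W → W → ℝ) (v : ℕ → W → ℝ) : Fml → W → ℝ
  | .var p, w => v p w
  | .inv φ, w => 1 - Fml.eval R v φ w
  | .and φ χ, w => min (Fml.eval R v φ w) (Fml.eval R v χ w)
  | .imp φ χ, w => Gimp (Fml.eval R v φ w) (Fml.eval R v χ w)
  | .box φ, w => sInf (Set.range fun w' => Gimp (R w w') (Fml.eval R v φ w'))
  | .dia φ, w => sSup (Set.range fun w' => min (R w w') (Fml.eval R v φ w'))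

def KGinvValid {W : Type} (R : W → W → ℝ) (φ : Fml) : Prop :=
  ∀ v : ℕ → W → ℝ, (∀ p w, v p w ∈ Set.Icc (0:ℝ) 1) → ∀ w : W, Fml.eval R v φ w = 1

noncomputable def R3 : Fin 3 → Fin 3 → ℝ :=
  fun i j => if i = 0 ∧ (j = 1 ∨ j = 2) then 2/3 else 0

noncomputable def v3 : ℕ → Fin 3 → ℝ :=
  fun _ w => if w = 0 then 1 else if w = 1 then 1/5 else 1/4


lemma eval_bounds (τ : Fml) : ∀ w : Fin 3, Fml.eval R3 v3 τ w ∈ Set.Icc (0:ℝ) 1 := by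
  induction τ with
  | var p =>
    intro w; unfold Fml.eval v3
    split <;> [norm_num; split <;> norm_num]
  | inv φ ih =>
    intro w; have := ih w
    simp only [Fml.eval, Set.mem_Icc] at *
    constructor <;> linarith [this.1, this.2]
  | and φ χ ih1 ih2 =>
    intro w; have h1 := ih1 w; have h2 := ih2 w
    simp only [Fml.eval, Set.mem_Icc] at *
    exact ⟨le_min h1.1 h2.1, le_trans (min_le_left _ _) h1.2⟩
  | imp φ χ ih1 ih2 =>
    intro w; have h2 := ih2 w
    simp only [Fml.eval, Set.mem_Icc, Gimp] at *
    split
    · norm_num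
    · exact h2
  | box φ ih =>
    intro w
    simp only [Fml.eval, Set.mem_Icc]
    set f := fun w' => Gimp (R3 w w') (Fml.eval R3 v3 φ w') with hf
    have hbdd : BddBelow (Set.range f) := (Set.finite_range f).bddBelow
    have hne : (Set.range f).Nonempty := Set.range_nonempty f
    constructor
    · apply le_csInf hne
      rintro y ⟨j, rfl⟩
      have := ih j
      simp only [hf, Gimp, Set.mem_Icc] at *
      split
      · norm_num
      · exact this.1
    · refine le_trans (csInf_le hbdd (Set.mem_range_self 0)) ?_
      have := ih 0
      simp only [hf, Gimp, Set.mem_Icc] at *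
      split
      · norm_num
      · exact this.2
  | dia φ ih =>
    intro w
    simp only [Fml.eval, Set.mem_Icc]
    set f := fun w' => min (R3 w w') (Fml.eval R3 v3 φ w') with hf
    have hbdd : BddAbove (Set.range f) := (Set.finite_range f).bddAbove
    have hne : (Set.range f).Nonempty := Set.range_nonempty f
    constructor
    · refine le_trans ?_ (le_csSup hbdd (Set.mem_range_self 0))
      have := ih 0
      simp only [hf, R3, Set.mem_Icc] at *
      exact le_min (by split <;> norm_num) this.1
    · apply csSup_le hne
      rintro y ⟨j, rfl⟩
      refine le_trans (min_le_right _ _) (ih j).2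


lemma R3_zero (w j : Fin 3) (hw : w ≠ 0) : R3 w j = 0 := by
  simp [R3, hw]

lemma box_eval (φ : Fml) (w : Fin 3) (hw : w ≠ 0) :
    Fml.eval R3 v3 (.box φ) w = 1 := by
  simp only [Fml.eval]
  have h : (fun w' => Gimp (R3 w w') (Fml.eval R3 v3 φ w')) = fun _ => (1:ℝ) := by
    funext j
    rw [R3_zero w j hw]
    unfold Gimp
    rw [if_pos (eval_bounds φ j).1]
  rw [h, Set.range_const, csInf_singleton]

lemma dia_eval (φ : Fml) (w : Fin 3) (hw : w ≠ 0) :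
    Fml.eval R3 v3 (.dia φ) w = 0 := by
  simp only [Fml.eval]
  have h : (fun w' => min (R3 w w') (Fml.eval R3 v3 φ w')) = fun _ => (0:ℝ) := by
    funext j
    rw [R3_zero w j hw]
    exact min_eq_left (eval_bounds φ j).1
  rw [h, Set.range_const, csSup_singleton]

theorem statement3 (τ : Fml) :
    Fml.eval R3 v3 τ 1 ∈ ({0, 1/5, 4/5, 1} : Set ℝ) ∧
    Fml.eval R3 v3 τ 2 ∈ ({0, 1/4, 3/4, 1} : Set ℝ) := by
 constructor <;>
  · induction τ with
    | var p => simp [Fml.eval, v3]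
    | inv φ ih =>
      simp only [Fml.eval]
      rcases ih with h|h|h|h <;> rw [h] <;> norm_num
    | and φ χ ih1 ih2 =>
      simp only [Fml.eval]
      rcases ih1 with h1|h1|h1|h1 <;> rcases ih2 with h2|h2|h2|h2 <;>
        rw [h1, h2] <;> simp [min_def] <;> norm_num
    | imp φ χ ih1 ih2 =>
      simp only [Fml.eval, Gimp]
      split
      · simp
      · exact ih2
    | box φ ih =>
      rw [box_eval φ _ (by decide)]; simp
    | dia φ ih =>
      rw [dia_eval φ _ (by decide)]; simp
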